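/- For n ≥ 3, the connected domination number of the crown graph C_{n,n} equals 4; in particular, {1, 2, 4, 5} is a connected dominating set of minimum size, and no set of at most 3 vertices is a connected dominating set. -/

import Mathlib

open SimpleGraph

/-- The crown graph `C_{n,n}`: vertices `Fin (2*n)`, where index `2i-2` plays the role of the
odd-labelled vertex `2i-1` of the paper and index `2i-1` the even-labelled vertex `2i`.
An even index `u` and an odd index `v` are adjacent iff `v ≠ u + 1`. -/
def crownGraph (n : ℕ) : SimpleGraph (Fin (2 * n)) where
  Adj u v := (u.val % 2 = 0 ∧ v.val % 2 = 1 ∧ v.val ≠ u.val + 1) ∨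
             (v.val % 2 = 0 ∧ u.val % 2 = 1 ∧ u.val ≠ v.val + 1)
  symm := by constructor; intro u v h; tauto
  loopless := by constructor; intro u h; rcases h with ⟨h1, h2, _⟩ | ⟨h1, h2, _⟩ <;> omega

/-- The part `X` (odd-labelled vertices of the paper): even indices. -/
def crownX (n : ℕ) : Finset (Fin (2 * n)) := Finset.univ.filter (fun u => u.val % 2 = 0)

/-- The part `Y` (even-labelled vertices of the paper): odd indices. -/
def crownY (n : ℕ) : Finset (Fin (2 * n)) := Finset.univ.filter (fun u => u.val % 2 = 1)

/-- `D` is a dominating set of `G`. -/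
def IsDominatingSet {V : Type*} (G : SimpleGraph V) (D : Finset V) : Prop :=
  ∀ v, v ∉ D → ∃ u ∈ D, G.Adj u v

/-- `D` is a connected dominating set of `G`. -/
def IsConnectedDominatingSet {V : Type*} (G : SimpleGraph V) (D : Finset V) : Prop :=
  IsDominatingSet G D ∧ (G.induce (↑D : Set V)).Connected

/-- The connected domination number of `G`. -/
noncomputable def connectedDominationNumber {V : Type*} (G : SimpleGraph V) : ℕ :=
  sInf { k | ∃ D : Finset V, D.card = k ∧ IsConnectedDominatingSet G D }

lemma crown_adj {n : ℕ} {u v : Fin (2*n)} :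
    (crownGraph n).Adj u v ↔ (u.val % 2 = 0 ∧ v.val % 2 = 1 ∧ v.val ≠ u.val + 1) ∨
             (v.val % 2 = 0 ∧ u.val % 2 = 1 ∧ u.val ≠ v.val + 1) := Iff.rfl

lemma not_connected_of_isolated {V : Type*} (G : SimpleGraph V) (D : Finset V)
    (v a : V) (hv : v ∈ D) (ha : a ∈ D) (hne : v ≠ a)
    (hiso : ∀ u ∈ D, ¬ G.Adj v u) :
    ¬ (G.induce (↑D : Set V)).Connected := by
  intro hc
  obtain ⟨w⟩ := hc.preconnected ⟨v, hv⟩ ⟨a, ha⟩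
  have hnil : ¬ w.Nil := SimpleGraph.Walk.not_nil_of_ne (by simp [hne])
  exact hiso _ (w.getVert 1).2 (SimpleGraph.Walk.adj_snd hnil)

lemma crown_no_small (n : ℕ) (hn : 3 ≤ n) (D : Finset (Fin (2 * n))) (hcard : D.card ≤ 3) :
    ¬ IsConnectedDominatingSet (crownGraph n) D := by
  have h2n : 6 ≤ 2 * n := by omega
  rintro ⟨hdom, hconn⟩
  obtain ⟨⟨v0, hv0⟩⟩ := hconn.nonempty
  have hv0' : v0 ∈ D := hv0
  rcases eq_or_lt_of_le (Finset.one_le_card.mpr ⟨v0, hv0'⟩) with h1 | h2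
  · -- |D| = 1 : domination fails
    obtain ⟨a, rfl⟩ := Finset.card_eq_one.mp h1.symm
    have hva : v0 = a := Finset.mem_singleton.mp hv0'
    subst hva
    rcases Nat.mod_two_eq_zero_or_one v0.val with hpar | hpar
    · have hlt : v0.val + 1 < 2 * n := by have := v0.isLt; omega
      have hw : (⟨v0.val + 1, hlt⟩ : Fin (2 * n)) ∉ ({v0} : Finset (Fin (2*n))) := by
        simp only [Finset.mem_singleton, Fin.ext_iff]; omega
      obtain ⟨u, hu, hadj⟩ := hdom _ hw
      have hue : u = v0 := Finset.mem_singleton.mp hu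
      subst hue
      rcases crown_adj.mp hadj with ⟨p1, p2, p3⟩ | ⟨p1, p2, p3⟩ <;> simp at p1 p2 p3 <;> omega
    · have hlt : v0.val - 1 < 2 * n := by have := v0.isLt; omega
      have hw : (⟨v0.val - 1, hlt⟩ : Fin (2 * n)) ∉ ({v0} : Finset (Fin (2*n))) := by
        simp only [Finset.mem_singleton, Fin.ext_iff]; omega
      obtain ⟨u, hu, hadj⟩ := hdom _ hw
      have hue : u = v0 := Finset.mem_singleton.mp hu
      subst hue
      rcases crown_adj.mp hadj with ⟨p1, p2, p3⟩ | ⟨p1, p2, p3⟩ <;> simp at p1 p2 p3 <;> omega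
  · -- |D| ≥ 2
    obtain ⟨a, ha, b, hb, hab⟩ := Finset.one_lt_card.mp h2
    -- there is an edge inside D
    have hedge : ∃ x ∈ D, ∃ y ∈ D, (crownGraph n).Adj x y := by
      by_contra hno
      push_neg at hno
      exact not_connected_of_isolated _ D a b ha hb hab (hno a ha) hconn
    obtain ⟨x, hx, y, hy, hxy⟩ := hedge
    -- extract an even and an odd element of D
    obtain ⟨e, he, heP, o, ho, hoP⟩ :
        ∃ e ∈ D, e.val % 2 = 0 ∧ ∃ o ∈ D, o.val % 2 = 1 := by
      rcases crown_adj.mp hxy with ⟨p1, p2, _⟩ | ⟨p1, p2, _⟩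
      · exact ⟨x, hx, p1, y, hy, p2⟩
      · exact ⟨y, hy, p1, x, hx, p2⟩
    set E := D.filter (fun u => u.val % 2 = 0) with hE
    set O := D.filter (fun u => ¬ u.val % 2 = 0) with hO
    have hdisj : Disjoint E O := by
      rw [Finset.disjoint_left]
      intro u huE huO
      exact (Finset.mem_filter.mp huO).2 (Finset.mem_filter.mp huE).2
    have hEO : E.card + O.card ≤ D.card := by
      rw [← Finset.card_union_of_disjoint hdisj]
      exact Finset.card_le_card (Finset.union_subset (Finset.filter_subset _ _)
        (Finset.filter_subset _ _))
    have heE : e ∈ E := Finset.mem_filter.mpr ⟨he, heP⟩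
    have hoO : o ∈ O := Finset.mem_filter.mpr ⟨ho, by omega⟩
    have hE1 : 1 ≤ E.card := Finset.one_le_card.mpr ⟨e, heE⟩
    have hO1 : 1 ≤ O.card := Finset.one_le_card.mpr ⟨o, hoO⟩
    rcases (by omega : E.card = 1 ∨ O.card = 1) with hc1 | hc1
    · -- E = {e}
      obtain ⟨e', hEe⟩ := Finset.card_eq_one.mp hc1
      have hee : e' = e := by
        have := heE; rw [hEe] at this; exact (Finset.mem_singleton.mp this).symm
      subst hee
      have honly : ∀ u ∈ D, u.val % 2 = 0 → u = e' := by
        intro u hu hup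
        have : u ∈ E := Finset.mem_filter.mpr ⟨hu, hup⟩
        rw [hEe] at this; exact Finset.mem_singleton.mp this
      have hlt : e'.val + 1 < 2 * n := by have := e'.isLt; omega
      set w : Fin (2 * n) := ⟨e'.val + 1, hlt⟩ with hwdef
      have hwval : w.val = e'.val + 1 := rfl
      have hwD : w ∈ D := by
        by_contra hwD
        obtain ⟨u, hu, hadj⟩ := hdom _ hwD
        rcases crown_adj.mp hadj with ⟨p1, p2, p3⟩ | ⟨p1, p2, p3⟩
        · have hue := congrArg Fin.val (honly u hu p1); omega
        · omega
      have hne : w ≠ e' := by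
        intro h; rw [h] at hwval; omega
      refine not_connected_of_isolated _ D w e' hwD he hne ?_ hconn
      intro u hu hadj
      rcases crown_adj.mp hadj with ⟨p1, p2, p3⟩ | ⟨p1, p2, p3⟩
      · omega
      · have hue := congrArg Fin.val (honly u hu p1); omega
    · -- O = {o}
      obtain ⟨o', hOo⟩ := Finset.card_eq_one.mp hc1
      have hoo : o' = o := by
        have := hoO; rw [hOo] at this; exact (Finset.mem_singleton.mp this).symm
      subst hoo
      have honly : ∀ u ∈ D, u.val % 2 = 1 → u = o' := by
        intro u hu hup
        have : u ∈ O := Finset.mem_filter.mpr ⟨hu, by omega⟩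
        rw [hOo] at this; exact Finset.mem_singleton.mp this
      have hlt : o'.val - 1 < 2 * n := by have := o'.isLt; omega
      set w : Fin (2 * n) := ⟨o'.val - 1, hlt⟩ with hwdef
      have hwval : w.val = o'.val - 1 := rfl
      have hov : o'.val = w.val + 1 := by rw [hwval]; omega
      have hwD : w ∈ D := by
        by_contra hwD
        obtain ⟨u, hu, hadj⟩ := hdom _ hwD
        rcases crown_adj.mp hadj with ⟨p1, p2, p3⟩ | ⟨p1, p2, p3⟩
        · omega
        · have hue := congrArg Fin.val (honly u hu p2); omega
      have hne : w ≠ o' := by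
        intro h; rw [h] at hov; omega
      refine not_connected_of_isolated _ D w o' hwD ho hne ?_ hconn
      intro u hu hadj
      rcases crown_adj.mp hadj with ⟨p1, p2, p3⟩ | ⟨p1, p2, p3⟩
      · have hue := congrArg Fin.val (honly u hu p2); omega
      · omega

lemma crown_D0 (n : ℕ) (hn : 3 ≤ n) :
    IsConnectedDominatingSet (crownGraph n)
      ({⟨0, by have := hn; omega⟩, ⟨1, by have := hn; omega⟩, ⟨3, by have := hn; omega⟩,
        ⟨4, by have := hn; omega⟩} : Finset (Fin (2 * n))) := by
  have h2n : 6 ≤ 2 * n := by omega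
  set D0 : Finset (Fin (2 * n)) :=
    ({⟨0, by omega⟩, ⟨1, by omega⟩, ⟨3, by omega⟩, ⟨4, by omega⟩} : Finset (Fin (2 * n))) with hD0
  constructor
  · -- dominating
    intro v hv
    have hv' : v.val ≠ 0 ∧ v.val ≠ 1 ∧ v.val ≠ 3 ∧ v.val ≠ 4 := by
      simp only [hD0, Finset.mem_insert, Finset.mem_singleton, Fin.ext_iff] at hv
      push_neg at hv
      exact hv
    rcases Nat.mod_two_eq_zero_or_one v.val with hpar | hpar
    · refine ⟨⟨1, by omega⟩, by simp [hD0], Or.inr ⟨hpar, by simp, by simp; omega⟩⟩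
    · refine ⟨⟨0, by omega⟩, by simp [hD0], Or.inl ⟨by simp, hpar, by simp; omega⟩⟩
  · -- connected
    have h0 : (⟨0, by omega⟩ : Fin (2*n)) ∈ D0 := by simp [hD0]
    have h1 : (⟨1, by omega⟩ : Fin (2*n)) ∈ D0 := by simp [hD0]
    have h3 : (⟨3, by omega⟩ : Fin (2*n)) ∈ D0 := by simp [hD0]
    have h4 : (⟨4, by omega⟩ : Fin (2*n)) ∈ D0 := by simp [hD0]
    set G' := (crownGraph n).induce (↑D0 : Set (Fin (2*n))) with hG'
    have a03 : G'.Adj ⟨⟨0, by omega⟩, h0⟩ ⟨⟨3, by omega⟩, h3⟩ := by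
      show (crownGraph n).Adj ⟨0, by omega⟩ ⟨3, by omega⟩
      exact Or.inl ⟨by norm_num, by norm_num, by norm_num⟩
    have a14 : G'.Adj ⟨⟨1, by omega⟩, h1⟩ ⟨⟨4, by omega⟩, h4⟩ := by
      show (crownGraph n).Adj ⟨1, by omega⟩ ⟨4, by omega⟩
      exact Or.inr ⟨by norm_num, by norm_num, by norm_num⟩
    have a43 : G'.Adj ⟨⟨4, by omega⟩, h4⟩ ⟨⟨3, by omega⟩, h3⟩ := by
      show (crownGraph n).Adj ⟨4, by omega⟩ ⟨3, by omega⟩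
      exact Or.inl ⟨by norm_num, by norm_num, by norm_num⟩
    have key : ∀ s : (↑D0 : Set (Fin (2*n))), G'.Reachable s ⟨⟨3, by omega⟩, h3⟩ := by
      rintro ⟨s, hs⟩
      have hs' : s = ⟨0, by omega⟩ ∨ s = ⟨1, by omega⟩ ∨ s = ⟨3, by omega⟩ ∨
          s = ⟨4, by omega⟩ := by
        simpa only [hD0, Finset.coe_insert, Set.mem_insert_iff, Finset.coe_singleton,
          Set.mem_singleton_iff] using hs
      rcases hs' with rfl | rfl | rfl | rfl
      · exact a03.reachable
      · exact (a14.reachable).trans a43.reachable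
      · exact SimpleGraph.Reachable.refl _
      · exact a43.reachable
    haveI : Nonempty (↑D0 : Set (Fin (2*n))) := ⟨⟨⟨3, by omega⟩, h3⟩⟩
    exact SimpleGraph.Connected.mk (fun u v => (key u).trans (key v).symm)


/-- The connected domination number of the crown graph is `4`; the set corresponding to the
paper's vertices `{1, 2, 4, 5}` (indices `0, 1, 3, 4`) is a connected dominating set, and no
set of at most `3` vertices is a connected dominating set. -/
theorem crown_connectedDominationNumber (n : ℕ) (hn : 3 ≤ n) :
    connectedDominationNumber (crownGraph n) = 4 ∧
    IsConnectedDominatingSet (crownGraph n)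
      ({⟨0, by omega⟩, ⟨1, by omega⟩, ⟨3, by omega⟩, ⟨4, by omega⟩} : Finset (Fin (2 * n))) ∧
    ∀ D : Finset (Fin (2 * n)), D.card ≤ 3 → ¬ IsConnectedDominatingSet (crownGraph n) D := by
  have h2n : 6 ≤ 2 * n := by omega
  have hD0 := crown_D0 n hn
  have hcard4 : ({⟨0, by omega⟩, ⟨1, by omega⟩, ⟨3, by omega⟩, ⟨4, by omega⟩} :
      Finset (Fin (2 * n))).card = 4 := by
    rw [Finset.card_insert_of_notMem (by simp [Fin.ext_iff]),
        Finset.card_insert_of_notMem (by simp [Fin.ext_iff]),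
        Finset.card_insert_of_notMem (by simp [Fin.ext_iff]),
        Finset.card_singleton]
  refine ⟨?_, hD0, fun D hD => crown_no_small n hn D hD⟩
  apply le_antisymm
  · exact Nat.sInf_le ⟨_, hcard4, hD0⟩
  · refine le_csInf ⟨4, _, hcard4, hD0⟩ ?_
    rintro k ⟨D, hk, hDk⟩
    by_contra h
    exact crown_no_small n hn D (by omega) hDk
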